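/- For every natural number n, n · arccos(1/3) ≠ 2π. (The dihedral angle arccos(1/3) of the regular tetrahedron does not divide 2π; consequently regular tetrahedra cannot tile around an edge, so there is no compact packing of ℝ³ by unit spheres of a single size.) -/

import Mathlib

open Real

def aSeq : ℕ → ℤ
  | 0 => 1
  | 1 => 1
  | (k+2) => 2 * aSeq (k+1) - 9 * aSeq k

lemma aSeq_not_div3 : ∀ k, ¬ (3 ∣ aSeq k) := by
  intro k
  induction k using Nat.twoStepInduction with
  | zero => decide
  | one => decide
  | more k ih1 ih2 =>
    simp only [aSeq]
    intro h
    exact ih1 (by omega)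

lemma cos_n_arccos_third (k : ℕ) :
    Real.cos (k * Real.arccos (1 / 3)) = (aSeq k : ℝ) / 3 ^ k := by
  induction k using Nat.twoStepInduction with
  | zero => simp [aSeq]
  | one =>
    simp only [Nat.cast_one, one_mul, aSeq, pow_one]
    rw [Real.cos_arccos (by norm_num) (by norm_num)]
    norm_num
  | more k ih1 ih2 =>
    have key : Real.cos ((k + 2 : ℕ) * Real.arccos (1 / 3))
        + Real.cos ((k : ℕ) * Real.arccos (1 / 3))
        = 2 * Real.cos ((k + 1 : ℕ) * Real.arccos (1 / 3))
          * Real.cos (Real.arccos (1 / 3)) := by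
      have h1 : ((k + 2 : ℕ) : ℝ) * Real.arccos (1 / 3)
          = ((k + 1 : ℕ) : ℝ) * Real.arccos (1 / 3) + Real.arccos (1 / 3) := by
        push_cast; ring
      have h2 : ((k : ℕ) : ℝ) * Real.arccos (1 / 3)
          = ((k + 1 : ℕ) : ℝ) * Real.arccos (1 / 3) - Real.arccos (1 / 3) := by
        push_cast; ring
      rw [h1, h2, Real.cos_add, Real.cos_sub]
      ring
    have hca : Real.cos (Real.arccos (1 / 3)) = 1 / 3 :=
      Real.cos_arccos (by norm_num) (by norm_num)
    rw [ih1, ih2, hca] at key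
    have h3 : Real.cos ((k + 2 : ℕ) * Real.arccos (1 / 3))
        = 2 * ((aSeq (k+1) : ℝ) / 3 ^ (k+1)) * (1/3) - (aSeq k : ℝ) / 3 ^ k := by
      linarith
    rw [h3]
    show _ = (aSeq (k+2) : ℝ) / 3 ^ (k+2)
    simp only [aSeq]
    push_cast
    field_simp
    ring

/-- The dihedral angle `arccos(1/3)` of the regular tetrahedron does not divide `2π`:
for every natural number `n`, `n · arccos(1/3) ≠ 2π`. -/
theorem arccos_third_not_div_two_pi :
    ∀ n : ℕ, (n : ℝ) * Real.arccos (1 / 3) ≠ 2 * Real.pi := by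
  intro n h
  match n with
  | 0 =>
    simp at h
  | (m+1) =>
    have hc : Real.cos ((m+1 : ℕ) * Real.arccos (1 / 3)) = 1 := by
      rw [h, Real.cos_two_pi]
    rw [cos_n_arccos_third] at hc
    have h3 : (0:ℝ) < 3 ^ (m+1) := by positivity
    have : (aSeq (m+1) : ℝ) = 3 ^ (m+1) := by
      field_simp at hc
      linarith
    have hz : aSeq (m+1) = 3 ^ (m+1) := by exact_mod_cast this
    exact aSeq_not_div3 (m+1) (hz ▸ dvd_pow_self 3 (Nat.succ_ne_zero m))
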